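/- Let L be a Lipschitz seminorm on an order-unit space A, with metric ρ_L on S(A), and let L_{ρ_L}(a) = sup{|μ(a) - ν(a)|/ρ_L(μ,ν) : μ ≠ ν ∈ S(A)}. Then {a ∈ A : L_{ρ_L}(a) ≤ 1} equals the norm closure in A of L₁ = {a ∈ A : L(a) ≤ 1}. In particular L_{ρ_L} is the largest lower semicontinuous seminorm on A dominated by L, and ρ_{L_{ρ_L}} = ρ_L. -/

import Mathlib

open scoped ENNReal
set_option linter.unusedSectionVars false
set_option linter.unusedVariables false
set_option maxHeartbeats 1000000


/-- A state of an order-unit space `(A, e)`. -/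
def IsState {A : Type*} [NormedAddCommGroup A] [NormedSpace ℝ A] (e : A)
    (μ : A →L[ℝ] ℝ) : Prop :=
  μ e = 1 ∧ ‖μ‖ = 1

/-- The metric `ρ_L` on the state space: `ρ_L(μ,ν) = sup {|μ(a) - ν(a)| : L(a) ≤ 1}`. -/
noncomputable def rhoL {A : Type*} [NormedAddCommGroup A] [NormedSpace ℝ A]
    (L : A → ℝ) (μ ν : A →L[ℝ] ℝ) : ℝ≥0∞ :=
  ⨆ (a : A) (_ : L a ≤ 1), ENNReal.ofReal |μ a - ν a|

/-- The Lipschitz seminorm `L_{ρ_L}` of the affine function `â` on `(S(A), ρ_L)`: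
`L_{ρ_L}(a) = sup {|μ(a) - ν(a)|/ρ_L(μ,ν) : μ ≠ ν ∈ S(A)}`. -/
noncomputable def LfromRho {A : Type*} [NormedAddCommGroup A] [NormedSpace ℝ A]
    (e : A) (L : A → ℝ) (a : A) : ℝ≥0∞ :=
  ⨆ (μ : A →L[ℝ] ℝ) (ν : A →L[ℝ] ℝ) (_ : IsState e μ) (_ : IsState e ν) (_ : μ ≠ ν),
    ENNReal.ofReal |μ a - ν a| / rhoL L μ ν


section AuxStmt9
variable {A : Type*} [NormedAddCommGroup A] [NormedSpace ℝ A] [PartialOrder A]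

lemma aux_add_le_add (haddle : ∀ a b c : A, a ≤ b → a + c ≤ b + c)
    {a b c d : A} (h1 : a ≤ b) (h2 : c ≤ d) : a + c ≤ b + d := by
  refine le_trans (haddle _ _ c h1) ?_
  have := haddle _ _ b h2
  simpa [add_comm] using this

lemma aux_neg_le_neg (haddle : ∀ a b c : A, a ≤ b → a + c ≤ b + c)
    {a b : A} (h : a ≤ b) : -b ≤ -a := by
  have := haddle _ _ (-a - b) h
  rw [show a + (-a - b) = -b by abel, show b + (-a - b) = -a by abel] at this
  exact this

lemma aux_epos (e : A) (he : e ≠ 0)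
    (haddle : ∀ a b c : A, a ≤ b → a + c ≤ b + c)
    (hsmulle : ∀ (r : ℝ) (a : A), 0 ≤ r → 0 ≤ a → 0 ≤ r • a)
    (hnorm : ∀ a : A, ‖a‖ = sInf {r : ℝ | 0 ≤ r ∧ -(r • e) ≤ a ∧ a ≤ r • e}) :
    0 ≤ e := by
  have hne : ‖e‖ ≠ 0 := norm_ne_zero_iff.mpr he
  by_cases hS : ({r : ℝ | 0 ≤ r ∧ -(r • e) ≤ e ∧ e ≤ r • e}).Nonempty
  · obtain ⟨r, hr0, hr1, hr2⟩ := hS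
    rcases eq_or_lt_of_le hr0 with h0 | h0
    · exfalso; apply he
      rw [← h0] at hr1 hr2
      simp only [zero_smul, neg_zero] at hr1 hr2
      exact le_antisymm hr2 hr1
    · have h1 : (0:A) ≤ e + r • e := by
        have := haddle _ _ (r • e) hr1
        simpa using this
      have h2 : e + r • e = (1 + r) • e := by rw [add_smul, one_smul]
      rw [h2] at h1
      have := hsmulle (1+r)⁻¹ _ (by positivity) h1
      rwa [smul_smul, inv_mul_cancel₀ (by positivity), one_smul] at this
  · exfalso; apply hne
    rw [hnorm e, Set.not_nonempty_iff_eq_empty.mp hS, Real.sInf_empty]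

lemma aux_smul_mono (e : A) (hep : (0:A) ≤ e)
    (haddle : ∀ a b c : A, a ≤ b → a + c ≤ b + c)
    (hsmulle : ∀ (r : ℝ) (a : A), 0 ≤ r → 0 ≤ a → 0 ≤ r • a)
    {r s : ℝ} (h : r ≤ s) : r • e ≤ s • e := by
  have h0 : (0:A) ≤ (s - r) • e := hsmulle _ _ (by linarith) hep
  have := haddle _ _ (r • e) h0
  rw [zero_add, show (s - r) • e + r • e = s • e by rw [sub_smul]; abel] at this
  exact this

lemma aux_smul_le_smul (haddle : ∀ a b c : A, a ≤ b → a + c ≤ b + c)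
    (hsmulle : ∀ (r : ℝ) (a : A), 0 ≤ r → 0 ≤ a → 0 ≤ r • a)
    {c : ℝ} (hc : 0 ≤ c) {a b : A} (h : a ≤ b) : c • a ≤ c • b := by
  have h0 : (0:A) ≤ b - a := by
    have := haddle _ _ (-a) h; simpa [sub_eq_add_neg] using this
  have h1 := hsmulle c _ hc h0
  rw [smul_sub] at h1
  have := haddle _ _ (c • a) h1
  simpa using this


lemma aux_le_norm_smul (e : A) (he : e ≠ 0)
    (haddle : ∀ a b c : A, a ≤ b → a + c ≤ b + c)
    (hsmulle : ∀ (r : ℝ) (a : A), 0 ≤ r → 0 ≤ a → 0 ≤ r • a)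
    (hunit : ∀ a : A, ∃ r : ℝ, a ≤ r • e)
    (harch : ∀ a : A, (∀ r : ℝ, 0 < r → a ≤ r • e) → a ≤ 0)
    (hnorm : ∀ a : A, ‖a‖ = sInf {r : ℝ | 0 ≤ r ∧ -(r • e) ≤ a ∧ a ≤ r • e})
    (a : A) : a ≤ ‖a‖ • e := by
  have hep := aux_epos e he haddle hsmulle hnorm
  -- the defining set is nonempty
  have hS : ({r : ℝ | 0 ≤ r ∧ -(r • e) ≤ a ∧ a ≤ r • e}).Nonempty := by
    obtain ⟨r, hr⟩ := hunit a
    obtain ⟨s, hs⟩ := hunit (-a)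
    refine ⟨max (max r s) 0, le_max_right _ _, ?_, ?_⟩
    · have h1 : -a ≤ (max (max r s) 0) • e :=
        le_trans hs (aux_smul_mono e hep haddle hsmulle (le_trans (le_max_right r s) (le_max_left _ _)))
      have := aux_neg_le_neg haddle h1
      simpa using this
    · exact le_trans hr (aux_smul_mono e hep haddle hsmulle (le_trans (le_max_left r s) (le_max_left _ _)))
  have hbdd : BddBelow {r : ℝ | 0 ≤ r ∧ -(r • e) ≤ a ∧ a ≤ r • e} :=
    ⟨0, fun x hx => hx.1⟩
  have key : ∀ ε : ℝ, 0 < ε → a ≤ (‖a‖ + ε) • e := by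
    intro ε hε
    have hlt : sInf {r : ℝ | 0 ≤ r ∧ -(r • e) ≤ a ∧ a ≤ r • e} < ‖a‖ + ε := by
      rw [← hnorm a]; linarith
    obtain ⟨s, hs, hslt⟩ := exists_lt_of_csInf_lt hS hlt
    exact le_trans hs.2.2 (aux_smul_mono e hep haddle hsmulle (le_of_lt hslt))
  have h1 : a - ‖a‖ • e ≤ 0 := by
    apply harch
    intro r hr
    have := haddle _ _ (-(‖a‖ • e)) (key r hr)
    rw [show (‖a‖ + r) • e + -(‖a‖ • e) = r • e by rw [add_smul]; abel] at this
    simpa [sub_eq_add_neg] using this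
  have := haddle _ _ (‖a‖ • e) h1
  simpa [sub_eq_add_neg] using this

lemma aux_norm_le (e : A)
    (hnorm : ∀ a : A, ‖a‖ = sInf {r : ℝ | 0 ≤ r ∧ -(r • e) ≤ a ∧ a ≤ r • e})
    {a : A} {r : ℝ} (hr : 0 ≤ r) (h1 : -(r • e) ≤ a) (h2 : a ≤ r • e) : ‖a‖ ≤ r := by
  rw [hnorm a]
  exact csInf_le ⟨0, fun x hx => hx.1⟩ ⟨hr, h1, h2⟩

lemma aux_coeff_nonneg (e : A) (he : e ≠ 0) (hep : (0:A) ≤ e)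
    (haddle : ∀ a b c : A, a ≤ b → a + c ≤ b + c)
    (hsmulle : ∀ (r : ℝ) (a : A), 0 ≤ r → 0 ≤ a → 0 ≤ r • a)
    {y : A} {s : ℝ} (hy : (0:A) ≤ y) (hys : y ≤ s • e) : 0 ≤ s := by
  by_contra hs
  push_neg at hs
  have h1 : (0:A) ≤ s • e := le_trans hy hys
  have h2 : (0:A) ≤ (-s) • e := hsmulle (-s) e (by linarith) hep
  rw [neg_smul] at h2
  have h3 : s • e ≤ 0 := by simpa using aux_neg_le_neg haddle h2
  have h4 : s • e = 0 := le_antisymm h3 h1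
  apply he
  have : s⁻¹ • (s • e) = s⁻¹ • (0:A) := by rw [h4]
  rwa [smul_smul, inv_mul_cancel₀ (by linarith), one_smul, smul_zero] at this


lemma aux_neg_norm_smul_le (e : A) (he : e ≠ 0)
    (haddle : ∀ a b c : A, a ≤ b → a + c ≤ b + c)
    (hsmulle : ∀ (r : ℝ) (a : A), 0 ≤ r → 0 ≤ a → 0 ≤ r • a)
    (hunit : ∀ a : A, ∃ r : ℝ, a ≤ r • e)
    (harch : ∀ a : A, (∀ r : ℝ, 0 < r → a ≤ r • e) → a ≤ 0)
    (hnorm : ∀ a : A, ‖a‖ = sInf {r : ℝ | 0 ≤ r ∧ -(r • e) ≤ a ∧ a ≤ r • e})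
    (a : A) : -(‖a‖ • e) ≤ a := by
  have h := aux_le_norm_smul e he haddle hsmulle hunit harch hnorm (-a)
  rw [norm_neg] at h
  simpa using aux_neg_le_neg haddle h

lemma aux_norm_e_le (e : A) (he : e ≠ 0) (hep : (0:A) ≤ e)
    (haddle : ∀ a b c : A, a ≤ b → a + c ≤ b + c)
    (hnorm : ∀ a : A, ‖a‖ = sInf {r : ℝ | 0 ≤ r ∧ -(r • e) ≤ a ∧ a ≤ r • e}) :
    ‖e‖ ≤ 1 := by
  refine aux_norm_le e hnorm zero_le_one ?_ (by rw [one_smul])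
  rw [one_smul]
  have h1 : -e ≤ 0 := by simpa using aux_neg_le_neg haddle hep
  exact le_trans h1 hep

lemma aux_pos_bound (e : A) (he : e ≠ 0)
    (haddle : ∀ a b c : A, a ≤ b → a + c ≤ b + c)
    (hsmulle : ∀ (r : ℝ) (a : A), 0 ≤ r → 0 ≤ a → 0 ≤ r • a)
    (hunit : ∀ a : A, ∃ r : ℝ, a ≤ r • e)
    (harch : ∀ a : A, (∀ r : ℝ, 0 < r → a ≤ r • e) → a ≤ 0)
    (hnorm : ∀ a : A, ‖a‖ = sInf {r : ℝ | 0 ≤ r ∧ -(r • e) ≤ a ∧ a ≤ r • e})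
    (g : A →ₗ[ℝ] ℝ) (hpos : ∀ x : A, (0:A) ≤ x → 0 ≤ g x) (hge : g e = 1)
    (x : A) : |g x| ≤ ‖x‖ := by
  have hs1 := aux_le_norm_smul e he haddle hsmulle hunit harch hnorm x
  have hs2 := aux_neg_norm_smul_le e he haddle hsmulle hunit harch hnorm x
  have h1 : (0:A) ≤ ‖x‖ • e - x := by
    have := haddle _ _ (-x) hs1; simpa [sub_eq_add_neg] using this
  have h2 : (0:A) ≤ ‖x‖ • e + x := by
    have := haddle _ _ (‖x‖ • e) hs2; rwa [neg_add_cancel, add_comm] at this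
  have g1 := hpos _ h1
  have g2 := hpos _ h2
  rw [map_sub, map_smul, smul_eq_mul, hge, mul_one] at g1
  rw [map_add, map_smul, smul_eq_mul, hge, mul_one] at g2
  exact abs_le.mpr ⟨by linarith, by linarith⟩

lemma aux_decomp (e : A) (he : e ≠ 0)
    (haddle : ∀ a b c : A, a ≤ b → a + c ≤ b + c)
    (hsmulle : ∀ (r : ℝ) (a : A), 0 ≤ r → 0 ≤ a → 0 ≤ r • a)
    (hunit : ∀ a : A, ∃ r : ℝ, a ≤ r • e)
    (harch : ∀ a : A, (∀ r : ℝ, 0 < r → a ≤ r • e) → a ≤ 0)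
    (hnorm : ∀ a : A, ‖a‖ = sInf {r : ℝ | 0 ≤ r ∧ -(r • e) ≤ a ∧ a ≤ r • e})
    (f : A →L[ℝ] ℝ) (hfe : f e = 0) (hf0 : f ≠ 0) :
    ∃ μ ν : A →L[ℝ] ℝ, (μ e = 1 ∧ ‖μ‖ = 1) ∧ (ν e = 1 ∧ ‖ν‖ = 1) ∧
      ∀ x, f x = ‖f‖ * (μ x - ν x) := by
  have hep := aux_epos e he haddle hsmulle hnorm
  set t := ‖f‖ with ht
  have htpos : 0 < t := norm_pos_iff.mpr hf0
  set S : A → Set ℝ := fun a =>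
    {z | ∃ r : ℝ, ∃ y : A, (0:A) ≤ y ∧ a ≤ r • e - y ∧ z = r + f y / t} with hSdef
  have cost_lb : ∀ (a : A) (r : ℝ) (y : A) (β : ℝ), (0:A) ≤ y → a ≤ r • e - y →
      β • e ≤ a → β ≤ r + f y / t := by
    intro a r y β hy hdec hβ
    have h1 : y ≤ r • e - a := by
      have h2 := haddle _ _ y hdec
      rw [sub_add_cancel] at h2
      have h3 := haddle _ _ (-a) h2
      rw [show a + y + -a = y by abel, ← sub_eq_add_neg] at h3
      exact h3
    have h4 : r • e - a ≤ (r - β) • e := by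
      have h5 := aux_neg_le_neg haddle hβ
      have h6 := haddle _ _ (r • e) h5
      rw [show -a + r • e = r • e - a by abel,
        show -(β • e) + r • e = (r - β) • e by rw [sub_smul]; abel] at h6
      exact h6
    have h7 : y ≤ (r - β) • e := le_trans h1 h4
    have hs : 0 ≤ r - β := aux_coeff_nonneg e he hep haddle hsmulle hy h7
    have hb1 : -((r - β) • e) ≤ (2:ℝ) • y - (r - β) • e := by
      have h8 : (0:A) ≤ (2:ℝ) • y := hsmulle 2 y (by norm_num) hy
      have := haddle _ _ (-((r - β) • e)) h8
      rw [zero_add, ← sub_eq_add_neg] at this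
      exact this
    have hb2 : (2:ℝ) • y - (r - β) • e ≤ (r - β) • e := by
      have h0 : (0:A) ≤ (r - β) • e - y := by
        have := haddle _ _ (-y) h7; simpa [sub_eq_add_neg] using this
      have h8 : (0:A) ≤ (2:ℝ) • ((r - β) • e - y) := hsmulle 2 _ (by norm_num) h0
      have := haddle _ _ ((2:ℝ) • y - (r - β) • e) h8
      rw [zero_add, show (2:ℝ) • ((r - β) • e - y) + ((2:ℝ) • y - (r - β) • e)
        = (r - β) • e by module] at this
      exact this
    have hny' : ‖(2:ℝ) • y - (r - β) • e‖ ≤ r - β := aux_norm_le e hnorm hs hb1 hb2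
    have hfy' : f ((2:ℝ) • y - (r - β) • e) = 2 * f y := by
      rw [map_sub, map_smul, map_smul, smul_eq_mul, smul_eq_mul, hfe]; ring
    have habs : |2 * f y| ≤ t * (r - β) := by
      rw [← hfy']
      calc |f ((2:ℝ) • y - (r - β) • e)| ≤ ‖f‖ * ‖(2:ℝ) • y - (r - β) • e‖ :=
        f.le_opNorm _
      _ ≤ t * (r - β) := by
        rw [← ht]; exact mul_le_mul_of_nonneg_left hny' (le_of_lt htpos)
    have habs2 := abs_le.mp habs
    have hdiv : -((r - β)/2) ≤ f y / t := by
      rw [le_div_iff₀ htpos]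
      nlinarith [habs2.1]
    linarith
  have hSne : ∀ a : A, (S a).Nonempty := by
    intro a
    exact ⟨‖a‖, ‖a‖, 0, le_refl 0,
      by rw [sub_zero]; exact aux_le_norm_smul e he haddle hsmulle hunit harch hnorm a,
      by simp⟩
  have hSbdd : ∀ a : A, BddBelow (S a) := by
    intro a
    refine ⟨-‖a‖, ?_⟩
    rintro z ⟨r, y, hy, hd, rfl⟩
    refine cost_lb a r y (-‖a‖) hy hd ?_
    rw [neg_smul]
    exact aux_neg_norm_smul_le e he haddle hsmulle hunit harch hnorm a
  set p : A → ℝ := fun a => sInf (S a) with hpdef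
  have hpeq : ∀ a, p a = sInf (S a) := fun a => rfl
  have hp_le : ∀ a z, z ∈ S a → p a ≤ z := fun a z hz => csInf_le (hSbdd a) hz
  have hp_lb : ∀ a β, β • e ≤ a → β ≤ p a := by
    intro a β hβ
    refine le_csInf (hSne a) ?_
    rintro z ⟨r, y, hy, hd, rfl⟩
    exact cost_lb a r y β hy hd hβ
  have hp_add : ∀ x y, p (x + y) ≤ p x + p y := by
    intro x y
    refine le_of_forall_pos_le_add fun ε hε => ?_
    obtain ⟨z1, hz1, hz1lt⟩ := exists_lt_of_csInf_lt (hSne x)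
      (show sInf (S x) < p x + ε/2 by rw [hpeq x]; linarith)
    obtain ⟨z2, hz2, hz2lt⟩ := exists_lt_of_csInf_lt (hSne y)
      (show sInf (S y) < p y + ε/2 by rw [hpeq y]; linarith)
    obtain ⟨r1, y1, hy1, hd1, rfl⟩ := hz1
    obtain ⟨r2, y2, hy2, hd2, rfl⟩ := hz2
    have hysum : (0:A) ≤ y1 + y2 := by
      have := aux_add_le_add haddle hy1 hy2; simpa using this
    have hdsum : x + y ≤ (r1 + r2) • e - (y1 + y2) := by
      have := aux_add_le_add haddle hd1 hd2
      rwa [show r1 • e - y1 + (r2 • e - y2) = (r1 + r2) • e - (y1 + y2) by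
        rw [add_smul]; abel] at this
    have hmem : (r1 + r2) + f (y1 + y2) / t ∈ S (x + y) :=
      ⟨r1 + r2, y1 + y2, hysum, hdsum, rfl⟩
    have hle := hp_le _ _ hmem
    rw [map_add] at hle
    have : p (x + y) ≤ (r1 + f y1 / t) + (r2 + f y2 / t) := by
      rw [add_div] at hle; linarith
    linarith
  have hp_smul_le : ∀ c : ℝ, 0 < c → ∀ a, p (c • a) ≤ c * p a := by
    intro c hc a
    rw [mul_comm, ← div_le_iff₀ hc]
    refine le_csInf (hSne a) ?_
    rintro z ⟨r, y, hy, hd, rfl⟩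
    rw [div_le_iff₀ hc]
    have hdec : c • a ≤ (c * r) • e - c • y := by
      have := aux_smul_le_smul haddle hsmulle hc.le hd
      rwa [smul_sub, smul_smul] at this
    have hmem : c * r + f (c • y) / t ∈ S (c • a) :=
      ⟨c * r, c • y, hsmulle c y hc.le hy, hdec, rfl⟩
    calc p (c • a) ≤ c * r + f (c • y) / t := hp_le _ _ hmem
    _ = (r + f y / t) * c := by rw [map_smul, smul_eq_mul]; ring
  have hp_smul : ∀ c : ℝ, 0 < c → ∀ a, p (c • a) = c * p a := by
    intro c hc a
    refine le_antisymm (hp_smul_le c hc a) ?_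
    have h1 := hp_smul_le c⁻¹ (by positivity) (c • a)
    rw [smul_smul, inv_mul_cancel₀ (ne_of_gt hc), one_smul] at h1
    have h2 := mul_le_mul_of_nonneg_left h1 hc.le
    rwa [← mul_assoc, mul_inv_cancel₀ (ne_of_gt hc), one_mul] at h2
  have hfcond : ∀ x : ↥(LinearPMap.mkSpanSingleton (K := ℝ) (L := ℝ) (σ := RingHom.id ℝ) e (1:ℝ) he).domain,
      (LinearPMap.mkSpanSingleton (K := ℝ) (L := ℝ) (σ := RingHom.id ℝ) e (1:ℝ) he).toFun' x ≤ p ↑x := by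
    rintro ⟨x, hx⟩
    obtain ⟨c, rfl⟩ := Submodule.mem_span_singleton.mp hx
    have hmem : e ∈ (LinearPMap.mkSpanSingleton (K := ℝ) (L := ℝ) (σ := RingHom.id ℝ) e (1:ℝ) he).domain :=
      Submodule.mem_span_singleton.mpr ⟨1, one_smul _ _⟩
    have hval : (LinearPMap.mkSpanSingleton (K := ℝ) (L := ℝ) (σ := RingHom.id ℝ) e (1:ℝ) he).toFun' (⟨c • e, hx⟩ :
        ↥(LinearPMap.mkSpanSingleton (K := ℝ) (L := ℝ) (σ := RingHom.id ℝ) e (1:ℝ) he).domain) = c := by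
      have : (⟨c • e, hx⟩ : ↥(LinearPMap.mkSpanSingleton (K := ℝ) (L := ℝ) (σ := RingHom.id ℝ) e (1:ℝ) he).domain)
          = c • (⟨e, hmem⟩ : ↥(LinearPMap.mkSpanSingleton (K := ℝ) (L := ℝ) (σ := RingHom.id ℝ) e (1:ℝ) he).domain) := by
        apply Subtype.ext; rfl
      rw [show (LinearPMap.mkSpanSingleton (K := ℝ) (L := ℝ) (σ := RingHom.id ℝ) e (1:ℝ) he).toFun' (⟨c • e, hx⟩ :
          ↥(LinearPMap.mkSpanSingleton (K := ℝ) (L := ℝ) (σ := RingHom.id ℝ) e (1:ℝ) he).domain)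
          = (LinearPMap.mkSpanSingleton (K := ℝ) (L := ℝ) (σ := RingHom.id ℝ) e (1:ℝ) he).toFun' (c • (⟨e, hmem⟩ :
          ↥(LinearPMap.mkSpanSingleton (K := ℝ) (L := ℝ) (σ := RingHom.id ℝ) e (1:ℝ) he).domain)) from by rw [← this]]
      have hsm := LinearPMap.map_smul (LinearPMap.mkSpanSingleton (K := ℝ) (L := ℝ) (σ := RingHom.id ℝ) e (1:ℝ) he) c
        (⟨e, hmem⟩ : ↥(LinearPMap.mkSpanSingleton (K := ℝ) (L := ℝ) (σ := RingHom.id ℝ) e (1:ℝ) he).domain)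
      rw [hsm, LinearPMap.mkSpanSingleton_apply ℝ ℝ he (1:ℝ), smul_eq_mul, mul_one]
    rw [hval]
    exact hp_lb (c • e) c (le_refl _)
  obtain ⟨g, hg_eq, hg_le⟩ := exists_extension_of_le_sublinear
    (LinearPMap.mkSpanSingleton (K := ℝ) (L := ℝ) (σ := RingHom.id ℝ) e (1:ℝ) he) p (fun c hc x => hp_smul c hc x) hp_add hfcond
  have hge1 : g e = 1 := by
    have hmem : e ∈ (LinearPMap.mkSpanSingleton (K := ℝ) (L := ℝ) (σ := RingHom.id ℝ) e (1:ℝ) he).domain :=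
      Submodule.mem_span_singleton.mpr ⟨1, one_smul _ _⟩
    have := hg_eq ⟨e, hmem⟩
    rwa [LinearPMap.mkSpanSingleton_apply] at this
  have hgpos : ∀ x : A, (0:A) ≤ x → 0 ≤ g x := by
    intro x hx
    have hd : -x ≤ (0:ℝ) • e - 0 := by
      rw [zero_smul, sub_zero]
      simpa using aux_neg_le_neg haddle hx
    have hmem : (0:ℝ) ∈ S (-x) := ⟨0, 0, le_refl 0, hd, by simp⟩
    have := le_trans (hg_le (-x)) (hp_le _ _ hmem)
    rw [map_neg] at this; linarith
  have hgf : ∀ x : A, (0:A) ≤ x → 0 ≤ g x + f x / t := by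
    intro x hx
    have hd : -x ≤ (0:ℝ) • e - x := by rw [zero_smul, zero_sub]
    have hmem : f x / t ∈ S (-x) := ⟨0, x, hx, hd, by rw [zero_add]⟩
    have := le_trans (hg_le (-x)) (hp_le _ _ hmem)
    rw [map_neg] at this; linarith
  set μL : A →ₗ[ℝ] ℝ := g + t⁻¹ • (f : A →ₗ[ℝ] ℝ) with hμL
  have hμLapp : ∀ x, μL x = g x + t⁻¹ * f x := by
    intro x; simp [hμL]
  have hμLe : μL e = 1 := by rw [hμLapp, hge1, hfe]; ring
  have hμpos : ∀ x : A, (0:A) ≤ x → 0 ≤ μL x := by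
    intro x hx
    have := hgf x hx
    rw [hμLapp]
    rw [div_eq_inv_mul] at this
    linarith
  have hgb : ∀ x, |g x| ≤ ‖x‖ :=
    aux_pos_bound e he haddle hsmulle hunit harch hnorm g hgpos hge1
  have hμb : ∀ x, |μL x| ≤ ‖x‖ :=
    aux_pos_bound e he haddle hsmulle hunit harch hnorm μL hμpos hμLe
  set ν := LinearMap.mkContinuous g 1 (fun x => by
    rw [one_mul]; exact hgb x) with hν
  set μ := LinearMap.mkContinuous μL 1 (fun x => by
    rw [one_mul]; exact hμb x) with hμ
  have hνapp : ∀ x, ν x = g x := fun x => LinearMap.mkContinuous_apply _ _ _ x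
  have hμapp : ∀ x, μ x = μL x := fun x => LinearMap.mkContinuous_apply _ _ _ x
  have hnorm_of : ∀ (w : A →L[ℝ] ℝ), w e = 1 → ‖w‖ ≤ 1 → ‖w‖ = 1 := by
    intro w hwe hwle
    refine le_antisymm hwle ?_
    have h1 : |w e| ≤ ‖w‖ * ‖e‖ := w.le_opNorm e
    rw [hwe, abs_one] at h1
    have h2 : ‖w‖ * ‖e‖ ≤ ‖w‖ * 1 :=
      mul_le_mul_of_nonneg_left (aux_norm_e_le e he hep haddle hnorm) (norm_nonneg w)
    linarith
  refine ⟨μ, ν, ⟨by rw [hμapp]; exact hμLe, ?_⟩, ⟨by rw [hνapp]; exact hge1, ?_⟩, ?_⟩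
  · exact hnorm_of μ (by rw [hμapp]; exact hμLe)
      (LinearMap.mkContinuous_norm_le _ zero_le_one _)
  · exact hnorm_of ν (by rw [hνapp]; exact hge1)
      (LinearMap.mkContinuous_norm_le _ zero_le_one _)
  · intro x
    rw [hμapp, hνapp, hμLapp]
    rw [show g x + t⁻¹ * f x - g x = t⁻¹ * f x from by ring,
      ← mul_assoc, mul_inv_cancel₀ (ne_of_gt htpos), one_mul]

end AuxStmt9

/-- `{a : L_{ρ_L}(a) ≤ 1}` is the norm closure of `L₁ = {a : L(a) ≤ 1}`;
`L_{ρ_L}` is the largest lower semicontinuous seminorm dominated by `L`; and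
`ρ_{L_{ρ_L}} = ρ_L`. -/
theorem stmt_9 {A : Type*} [NormedAddCommGroup A] [NormedSpace ℝ A] [PartialOrder A]
    (e : A) (he : e ≠ 0)
    (haddle : ∀ a b c : A, a ≤ b → a + c ≤ b + c)
    (hsmulle : ∀ (r : ℝ) (a : A), 0 ≤ r → 0 ≤ a → 0 ≤ r • a)
    (hunit : ∀ a : A, ∃ r : ℝ, a ≤ r • e)
    (harch : ∀ a : A, (∀ r : ℝ, 0 < r → a ≤ r • e) → a ≤ 0)
    (hnorm : ∀ a : A, ‖a‖ = sInf {r : ℝ | 0 ≤ r ∧ -(r • e) ≤ a ∧ a ≤ r • e})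
    (L : A → ℝ)
    (hLadd : ∀ a b : A, L (a + b) ≤ L a + L b)
    (hLsmul : ∀ (t : ℝ) (a : A), L (t • a) = |t| * L a)
    (hLnull : ∀ a : A, L a = 0 ↔ ∃ t : ℝ, a = t • e) :
    {a : A | LfromRho e L a ≤ 1} = closure {a : A | L a ≤ 1} ∧
    (∀ a : A, LfromRho e L a ≤ ENNReal.ofReal (L a)) ∧
    (∀ M : A → ℝ, (∀ a b : A, M (a + b) ≤ M a + M b) →
      (∀ (t : ℝ) (a : A), M (t • a) = |t| * M a) →
      IsClosed {a : A | M a ≤ 1} →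
      (∀ a : A, M a ≤ L a) →
      ∀ a : A, ENNReal.ofReal (M a) ≤ LfromRho e L a) ∧
    (∀ μ ν : A →L[ℝ] ℝ, IsState e μ → IsState e ν →
      (⨆ (a : A) (_ : LfromRho e L a ≤ 1), ENNReal.ofReal |μ a - ν a|) = rhoL L μ ν) := by
  classical
  have hep := aux_epos e he haddle hsmulle hnorm
  have hL0 : L 0 = 0 := by have := hLsmul 0 0; simpa using this
  have hLnonneg : ∀ a : A, 0 ≤ L a := by
    intro a
    have h1 := hLadd a (-a)
    have h2 : L (-a) = L a := by have := hLsmul (-1) a; simpa using this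
    rw [show a + -a = (0:A) by abel, hL0, h2] at h1
    linarith
  have hLe : L e = 0 := (hLnull e).mpr ⟨1, (one_smul ℝ e).symm⟩
  have hterm_le : ∀ (a : A) (μ ν : A →L[ℝ] ℝ), IsState e μ → IsState e ν → μ ≠ ν →
      ENNReal.ofReal |μ a - ν a| / rhoL L μ ν ≤ LfromRho e L a := by
    intro a μ ν hμ hν hne
    exact le_iSup_of_le μ (le_iSup_of_le ν (le_iSup_of_le hμ (le_iSup_of_le hν
      (le_iSup_of_le hne le_rfl))))
  have hrho_ge : ∀ (b : A), L b ≤ 1 → ∀ (μ ν : A →L[ℝ] ℝ),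
      ENNReal.ofReal |μ b - ν b| ≤ rhoL L μ ν := fun b hb μ ν =>
    le_iSup_of_le b (le_iSup_of_le hb le_rfl)
  -- Second conjunct
  have hconj2 : ∀ a : A, LfromRho e L a ≤ ENNReal.ofReal (L a) := by
    intro a
    refine iSup_le fun μ => iSup_le fun ν => iSup_le fun hμ => iSup_le fun hν =>
      iSup_le fun hne => ?_
    rcases eq_or_lt_of_le (hLnonneg a) with h0 | h0
    · obtain ⟨s, rfl⟩ := (hLnull a).mp h0.symm
      have hz : μ (s • e) - ν (s • e) = 0 := by
        rw [map_smul, map_smul, smul_eq_mul, smul_eq_mul, hμ.1, hν.1]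
        ring
      rw [hz]
      simp
    · have hb : L ((L a)⁻¹ • a) ≤ 1 := by
        rw [hLsmul, abs_of_nonneg (by positivity), inv_mul_cancel₀ (ne_of_gt h0)]
      have h1 : ENNReal.ofReal |μ ((L a)⁻¹ • a) - ν ((L a)⁻¹ • a)| ≤ rhoL L μ ν :=
        hrho_ge _ hb μ ν
      have h2 : |μ ((L a)⁻¹ • a) - ν ((L a)⁻¹ • a)| = (L a)⁻¹ * |μ a - ν a| := by
        rw [map_smul, map_smul, smul_eq_mul, smul_eq_mul, ← mul_sub, abs_mul,
          abs_of_nonneg (by positivity)]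
      refine ENNReal.div_le_of_le_mul ?_
      calc ENNReal.ofReal |μ a - ν a|
          = ENNReal.ofReal (L a) * ENNReal.ofReal ((L a)⁻¹ * |μ a - ν a|) := by
            rw [← ENNReal.ofReal_mul (hLnonneg a)]
            congr 1
            field_simp
      _ ≤ ENNReal.ofReal (L a) * rhoL L μ ν := mul_le_mul_right (h2 ▸ h1) _
  -- First conjunct
  have hL1convex : Convex ℝ {a : A | L a ≤ 1} := by
    intro x hx y hy sa sb hsa hsb hsum
    simp only [Set.mem_setOf_eq] at hx hy ⊢
    calc L (sa • x + sb • y) ≤ L (sa • x) + L (sb • y) := hLadd _ _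
    _ = sa * L x + sb * L y := by
        rw [hLsmul, hLsmul, abs_of_nonneg hsa, abs_of_nonneg hsb]
    _ ≤ 1 := by nlinarith [hLnonneg x, hLnonneg y]
  have hsubset1 : {a : A | LfromRho e L a ≤ 1} ⊆ closure {a : A | L a ≤ 1} := by
    intro a ha
    simp only [Set.mem_setOf_eq] at ha
    by_contra hac
    obtain ⟨φ, u, hφlt, hφa⟩ :=
      geometric_hahn_banach_closed_point hL1convex.closure isClosed_closure hac
    have h0mem : (0:A) ∈ closure {x : A | L x ≤ 1} :=
      subset_closure (by simp only [Set.mem_setOf_eq, hL0]; norm_num)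
    have hu0 : 0 < u := by have := hφlt 0 h0mem; simpa using this
    have hsmem : ∀ s : ℝ, (s • e) ∈ closure {x : A | L x ≤ 1} := fun s =>
      subset_closure (by simp only [Set.mem_setOf_eq, hLsmul, hLe, mul_zero]; norm_num)
    have hφe : φ e = 0 := by
      by_contra hne
      have h1 := hφlt (((u+1)/(φ e)) • e) (hsmem _)
      rw [map_smul, smul_eq_mul, div_mul_cancel₀ _ hne] at h1
      linarith
    have hφne : φ ≠ 0 := by
      intro h
      rw [h] at hφa
      simp at hφa
      linarith
    obtain ⟨μ, ν, hμs, hνs, hfx⟩ :=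
      aux_decomp e he haddle hsmulle hunit harch hnorm φ hφe hφne
    have htpos : 0 < ‖φ‖ := norm_pos_iff.mpr hφne
    have hμν : μ ≠ ν := by
      intro hh
      apply hφne
      ext x
      rw [ContinuousLinearMap.zero_apply, hfx x, hh]
      ring
    have hφa0 : 0 < φ a := lt_trans hu0 hφa
    have hrho : rhoL L μ ν ≤ ENNReal.ofReal (u / ‖φ‖) := by
      refine iSup_le fun b => iSup_le fun hb => ENNReal.ofReal_le_ofReal ?_
      have hfb : |φ b| ≤ u := by
        have h1 := hφlt b (subset_closure hb)
        have hnb : L (-b) ≤ 1 := by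
          have h2 := hLsmul (-1) b
          rw [show (-1:ℝ) • b = -b by simp] at h2
          rw [h2]
          simpa using hb
        have h3 := hφlt (-b) (subset_closure hnb)
        rw [map_neg] at h3
        exact abs_le.mpr ⟨by linarith, by linarith⟩
      have hmn : μ b - ν b = φ b / ‖φ‖ := by rw [hfx b]; field_simp
      rw [hmn, abs_div, abs_of_pos htpos]
      gcongr
    have hnum : ENNReal.ofReal |μ a - ν a| = ENNReal.ofReal (φ a / ‖φ‖) := by
      have hmn : μ a - ν a = φ a / ‖φ‖ := by rw [hfx a]; field_simp
      rw [hmn, abs_of_pos (by positivity)]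
    have hρtop : rhoL L μ ν ≠ ⊤ := ne_top_of_le_ne_top ENNReal.ofReal_ne_top hrho
    have hlt : rhoL L μ ν < ENNReal.ofReal (φ a / ‖φ‖) := by
      refine lt_of_le_of_lt hrho ?_
      rw [ENNReal.ofReal_lt_ofReal_iff (by positivity)]
      gcongr
    have hne0 : ENNReal.ofReal (φ a / ‖φ‖) ≠ 0 :=
      (ENNReal.ofReal_pos.mpr (by positivity)).ne'
    have hkey : (1:ℝ≥0∞) < ENNReal.ofReal |μ a - ν a| / rhoL L μ ν := by
      rw [hnum]
      rcases eq_or_ne (rhoL L μ ν) 0 with h0 | h0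
      · rw [h0, ENNReal.div_zero hne0]
        exact ENNReal.one_lt_top
      · by_contra hcon
        push_neg at hcon
        have h5 := (ENNReal.div_le_iff h0 hρtop).mp hcon
        rw [one_mul] at h5
        exact absurd hlt (not_lt.mpr h5)
    exact absurd (le_trans (hterm_le a μ ν hμs hνs hμν) ha) (not_le.mpr hkey)
  have hsubset2 : closure {a : A | L a ≤ 1} ⊆ {a : A | LfromRho e L a ≤ 1} := by
    intro a ha
    obtain ⟨b, hbmem, hbl⟩ := mem_closure_iff_seq_limit.mp ha
    simp only [Set.mem_setOf_eq]
    refine iSup_le fun μ => iSup_le fun ν => iSup_le fun hμ => iSup_le fun hν =>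
      iSup_le fun hne => ?_
    have hkey : ENNReal.ofReal |μ a - ν a| ≤ rhoL L μ ν := by
      rcases eq_or_ne (rhoL L μ ν) ⊤ with htop | htop
      · rw [htop]; exact le_top
      · have hn : ∀ n, |μ (b n) - ν (b n)| ≤ (rhoL L μ ν).toReal := fun n =>
          (ENNReal.ofReal_le_iff_le_toReal htop).mp (hrho_ge _ (hbmem n) μ ν)
        have hc : Continuous fun x : A => |μ x - ν x| := (μ.continuous.sub ν.continuous).abs
        have hcont : Filter.Tendsto (fun n => |μ (b n) - ν (b n)|) Filter.atTop
            (nhds |μ a - ν a|) := (hc.tendsto a).comp hbl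
        have hlim : |μ a - ν a| ≤ (rhoL L μ ν).toReal :=
          le_of_tendsto hcont (Filter.Eventually.of_forall hn)
        calc ENNReal.ofReal |μ a - ν a| ≤ ENNReal.ofReal (rhoL L μ ν).toReal :=
          ENNReal.ofReal_le_ofReal hlim
        _ = rhoL L μ ν := ENNReal.ofReal_toReal htop
    exact ENNReal.div_le_of_le_mul (by rwa [one_mul])
  have hconj1 : {a : A | LfromRho e L a ≤ 1} = closure {a : A | L a ≤ 1} :=
    Set.Subset.antisymm hsubset1 hsubset2
  -- scaling of LfromRho
  have hsmulLfr : ∀ (c : ℝ), 0 ≤ c → ∀ a : A,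
      LfromRho e L (c • a) = ENNReal.ofReal c * LfromRho e L a := by
    intro c hc a
    rw [LfromRho, LfromRho]
    rw [ENNReal.mul_iSup]; refine iSup_congr fun μ => ?_
    rw [ENNReal.mul_iSup]; refine iSup_congr fun ν => ?_
    rw [ENNReal.mul_iSup]; refine iSup_congr fun hμ => ?_
    rw [ENNReal.mul_iSup]; refine iSup_congr fun hν => ?_
    rw [ENNReal.mul_iSup]; refine iSup_congr fun hne => ?_
    rw [map_smul, map_smul, smul_eq_mul, smul_eq_mul, ← mul_sub, abs_mul, abs_of_nonneg hc,
      ENNReal.ofReal_mul hc, mul_div_assoc]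
  refine ⟨hconj1, hconj2, ?_, ?_⟩
  · -- Third conjunct
    intro M hMadd hMsmul hMclosed hML a
    have hM0 : M 0 = 0 := by have := hMsmul 0 0; simpa using this
    have hMneg : ∀ x : A, M (-x) = M x := by
      intro x; have := hMsmul (-1) x; simpa using this
    have hMnonneg : ∀ x : A, 0 ≤ M x := by
      intro x
      have h1 := hMadd x (-x)
      rw [show x + -x = (0:A) by abel, hM0, hMneg] at h1
      linarith
    have hsub : closure {x : A | L x ≤ 1} ⊆ {x : A | M x ≤ 1} :=
      closure_minimal (fun x hx => le_trans (hML x) hx) hMclosed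
    have key : ∀ r : ℝ, 0 < r → LfromRho e L a ≤ ENNReal.ofReal r → M a ≤ r := by
      intro r hr hler
      have h2 : LfromRho e L (r⁻¹ • a) ≤ 1 := by
        rw [hsmulLfr r⁻¹ (by positivity) a]
        calc ENNReal.ofReal r⁻¹ * LfromRho e L a
            ≤ ENNReal.ofReal r⁻¹ * ENNReal.ofReal r := mul_le_mul_right hler _
        _ = ENNReal.ofReal (r⁻¹ * r) := (ENNReal.ofReal_mul (by positivity)).symm
        _ = 1 := by rw [inv_mul_cancel₀ (ne_of_gt hr), ENNReal.ofReal_one]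
      have h3 : r⁻¹ • a ∈ {x : A | LfromRho e L x ≤ 1} := h2
      rw [hconj1] at h3
      have h4 := hsub h3
      simp only [Set.mem_setOf_eq] at h4
      rw [hMsmul, abs_of_nonneg (by positivity)] at h4
      calc M a = r * (r⁻¹ * M a) := by field_simp
      _ ≤ r * 1 := mul_le_mul_of_nonneg_left h4 hr.le
      _ = r := mul_one r
    rcases eq_or_ne (LfromRho e L a) ⊤ with htop | htop
    · rw [htop]; exact le_top
    · have hfin : M a ≤ (LfromRho e L a).toReal := by
        refine le_of_forall_pos_le_add fun ε hε => ?_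
        refine key _ (add_pos_of_nonneg_of_pos ENNReal.toReal_nonneg hε) ?_
        rw [ENNReal.ofReal_add ENNReal.toReal_nonneg hε.le, ENNReal.ofReal_toReal htop]
        exact le_self_add
      calc ENNReal.ofReal (M a) ≤ ENNReal.ofReal (LfromRho e L a).toReal :=
        ENNReal.ofReal_le_ofReal hfin
      _ = LfromRho e L a := ENNReal.ofReal_toReal htop
  · -- Fourth conjunct
    intro μ ν hμ hν
    apply le_antisymm
    · refine iSup_le fun a => iSup_le fun ha => ?_
      rcases eq_or_ne μ ν with heq | hne
      · subst heq
        simp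
      · have h1 : ENNReal.ofReal |μ a - ν a| / rhoL L μ ν ≤ 1 :=
          le_trans (hterm_le a μ ν hμ hν hne) ha
        rcases eq_or_ne (rhoL L μ ν) ⊤ with htop | htop
        · rw [htop]; exact le_top
        · rcases eq_or_ne (rhoL L μ ν) 0 with h0 | h0
          · by_cases hx : ENNReal.ofReal |μ a - ν a| = 0
            · rw [hx]; exact zero_le
            · exfalso
              rw [h0, ENNReal.div_zero hx] at h1
              exact absurd h1 (by simp)
          · have h5 := (ENNReal.div_le_iff h0 htop).mp h1
            rwa [one_mul] at h5
    · refine iSup_le fun b => iSup_le fun hb => ?_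
      refine le_iSup_of_le b (le_iSup_of_le ?_ le_rfl)
      refine le_trans (hconj2 b) ?_
      rw [show (1:ℝ≥0∞) = ENNReal.ofReal 1 from ENNReal.ofReal_one.symm]
      exact ENNReal.ofReal_le_ofReal hb
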